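/- Let G be a graph of odd order n whose vertex set is partitioned as {x} ∪ V(H₁) ∪ V(H₂), where x is a cut vertex, H₁ and H₂ are the two components of G − x, and |H₁| = |H₂| = (n−1)/2. If the bipartite-hole-number satisfies α̃(G) = (n+1)/2, then x is adjacent to every other vertex of G and both H₁ and H₂ are complete graphs; consequently G = K₁ ∨ 2K_{(n−1)/2}. -/

import Mathlib

open scoped Classical

/-- An `(s,t)`-bipartite-hole: disjoint vertex sets of sizes `s` and `t` with no edge between. -/
def HasBipHole {V : Type*} (G : SimpleGraph V) (s t : ℕ) : Prop :=
  ∃ S T : Finset V, Disjoint S T ∧ S.card = s ∧ T.card = t ∧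
    ∀ a ∈ S, ∀ b ∈ T, ¬ G.Adj a b

/-- The bipartite-hole-number: least `k` admitting positive `s,t` with `s+t = k+1` and
no `(s,t)`-bipartite-hole. -/
noncomputable def bhn {V : Type*} (G : SimpleGraph V) : ℕ :=
  sInf {k | ∃ s t : ℕ, 0 < s ∧ 0 < t ∧ s + t = k + 1 ∧ ¬ HasBipHole G s t}

/-- The join `G ∨ K₁`: one new vertex adjacent to everything. -/
def joinK1 {V : Type*} (G : SimpleGraph V) : SimpleGraph (Option V) where
  Adj a b := match a, b with
    | some a, some b => G.Adj a b
    | some _, none => True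
    | none, some _ => True
    | none, none => False
  symm := by
    constructor
    rintro (_ | a) (_ | b) h
    · exact h.elim
    · trivial
    · trivial
    · exact G.adj_symm h
  loopless := by
    constructor
    rintro (_ | a) h
    · exact h
    · exact G.loopless.irrefl a h

/-- Minimum degree sum over non-adjacent pairs of distinct vertices. -/
noncomputable def sigma2 {V : Type*} [Fintype V] (G : SimpleGraph V) : ℕ :=
  sInf {m | ∃ x y : V, x ≠ y ∧ ¬ G.Adj x y ∧ G.degree x + G.degree y = m}

/-- A graph is traceable if it has a Hamilton path. -/
def IsTraceable {V : Type*} (G : SimpleGraph V) : Prop :=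
  ∃ (a b : V) (p : G.Walk a b), p.IsHamiltonian

/-- `G` is 2-connected: at least 3 vertices and deleting any vertex leaves it connected. -/
def TwoConnected {V : Type*} [Fintype V] (G : SimpleGraph V) : Prop :=
  3 ≤ Fintype.card V ∧ ∀ v : V, (SimpleGraph.induce ({v}ᶜ : Set V) G).Connected

theorem stmt12 {V : Type*} [Fintype V] (G : SimpleGraph V)
    (hodd : Odd (Fintype.card V))
    (x : V) (A B : Finset V)
    (hdisj : Disjoint A B) (hxA : x ∉ A) (hxB : x ∉ B)
    (hcover : A ∪ B = Finset.univ \ {x})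
    (hA : A.card = (Fintype.card V - 1) / 2) (hB : B.card = (Fintype.card V - 1) / 2)
    (hAB : ∀ a ∈ A, ∀ b ∈ B, ¬ G.Adj a b)
    (hAconn : (SimpleGraph.induce (↑A : Set V) G).Connected)
    (hBconn : (SimpleGraph.induce (↑B : Set V) G).Connected)
    (hbhn : bhn G = (Fintype.card V + 1) / 2) :
    (∀ y : V, y ≠ x → G.Adj x y) ∧
    (∀ u ∈ A, ∀ v ∈ A, u ≠ v → G.Adj u v) ∧
    (∀ u ∈ B, ∀ v ∈ B, u ≠ v → G.Adj u v) ∧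
    (∀ u v : V, G.Adj u v ↔
      u ≠ v ∧ (u = x ∨ v = x ∨ (u ∈ A ∧ v ∈ A) ∨ (u ∈ B ∧ v ∈ B))) := by
  classical
  obtain ⟨k, hk⟩ := hodd
  have hm : (Fintype.card V - 1) / 2 = k := by omega
  have hm1 : (Fintype.card V + 1) / 2 = k + 1 := by omega
  have hAk : A.card = k := by rw [hA, hm]
  have hBk : B.card = k := by rw [hB, hm]
  -- the defining set of bhn is nonempty
  have hne : {m | ∃ s t : ℕ, 0 < s ∧ 0 < t ∧ s + t = m + 1 ∧ ¬ HasBipHole G s t}.Nonempty := by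
    by_contra h
    rw [Set.not_nonempty_iff_eq_empty] at h
    rw [bhn, h, Nat.sInf_empty, hm1] at hbhn
    omega
  have hmem := Nat.sInf_mem hne
  rw [← bhn, hbhn, hm1] at hmem
  obtain ⟨s, t, hs, ht, hst, hhole⟩ := hmem
  -- rule out s ≤ k ∧ t ≤ k
  have hcases : (s = k + 1 ∧ t = 1) ∨ (s = 1 ∧ t = k + 1) := by
    by_contra hc
    have hsk : s ≤ k ∧ t ≤ k := by omega
    obtain ⟨S, hSA, hScard⟩ := Finset.exists_subset_card_eq (s := A) (n := s) (by omega)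
    obtain ⟨T, hTB, hTcard⟩ := Finset.exists_subset_card_eq (s := B) (n := t) (by omega)
    exact hhole ⟨S, T, hdisj.mono hSA hTB, hScard, hTcard,
      fun a ha b hb => hAB a (hSA ha) b (hTB hb)⟩
  -- key lemma
  have key : ∀ (S : Finset V) (b : V), S.card = k + 1 → b ∉ S → ∃ a ∈ S, G.Adj a b := by
    intro S b hScard hbS
    by_contra h
    push_neg at h
    rcases hcases with ⟨hs1, ht1⟩ | ⟨hs1, ht1⟩
    · subst hs1; subst ht1
      exact hhole ⟨S, {b}, Finset.disjoint_singleton_right.mpr hbS, hScard,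
        Finset.card_singleton b, fun a ha c hc => by
          rw [Finset.mem_singleton] at hc; subst hc; exact h a ha⟩
    · subst hs1; subst ht1
      exact hhole ⟨{b}, S, Finset.disjoint_singleton_left.mpr hbS,
        Finset.card_singleton b, hScard, fun c hc a ha hadj => by
          rw [Finset.mem_singleton] at hc; subst hc; exact h a ha hadj.symm⟩
  have hmemAB : ∀ y : V, y ≠ x → y ∈ A ∪ B := by
    intro y hy
    rw [hcover, Finset.mem_sdiff, Finset.mem_singleton]
    exact ⟨Finset.mem_univ y, hy⟩
  -- x is adjacent to everything else
  have hx : ∀ y : V, y ≠ x → G.Adj x y := by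
    intro y hy
    rcases Finset.mem_union.mp (hmemAB y hy) with hyA | hyB
    · have hyB' : y ∉ B := fun hyB => (Finset.disjoint_left.mp hdisj hyA) hyB
      have hcard : (insert x B).card = k + 1 := by
        rw [Finset.card_insert_of_notMem hxB, hBk]
      have hyS : y ∉ insert x B := by
        rw [Finset.mem_insert]; push_neg; exact ⟨hy, hyB'⟩
      obtain ⟨a, haS, hadj⟩ := key (insert x B) y hcard hyS
      rcases Finset.mem_insert.mp haS with rfl | haB
      · exact hadj
      · exact absurd hadj.symm (hAB y hyA a haB)
    · have hyA' : y ∉ A := fun hyA => (Finset.disjoint_left.mp hdisj hyA) hyB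
      have hcard : (insert x A).card = k + 1 := by
        rw [Finset.card_insert_of_notMem hxA, hAk]
      have hyS : y ∉ insert x A := by
        rw [Finset.mem_insert]; push_neg; exact ⟨hy, hyA'⟩
      obtain ⟨a, haS, hadj⟩ := key (insert x A) y hcard hyS
      rcases Finset.mem_insert.mp haS with rfl | haA
      · exact hadj
      · exact absurd hadj (hAB a haA y hyB)
  -- A is complete
  have hAcomp : ∀ u ∈ A, ∀ v ∈ A, u ≠ v → G.Adj u v := by
    intro u hu v hv huv
    have huB : u ∉ B := fun h => (Finset.disjoint_left.mp hdisj hu) h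
    have hvB : v ∉ B := fun h => (Finset.disjoint_left.mp hdisj hv) h
    have hcard : (insert u B).card = k + 1 := by
      rw [Finset.card_insert_of_notMem huB, hBk]
    have hvS : v ∉ insert u B := by
      rw [Finset.mem_insert]; push_neg; exact ⟨huv.symm, hvB⟩
    obtain ⟨a, haS, hadj⟩ := key (insert u B) v hcard hvS
    rcases Finset.mem_insert.mp haS with rfl | haB
    · exact hadj
    · exact absurd hadj.symm (hAB v hv a haB)
  -- B is complete
  have hBcomp : ∀ u ∈ B, ∀ v ∈ B, u ≠ v → G.Adj u v := by
    intro u hu v hv huv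
    have huA : u ∉ A := fun h => (Finset.disjoint_left.mp hdisj h) hu
    have hvA : v ∉ A := fun h => (Finset.disjoint_left.mp hdisj h) hv
    have hcard : (insert u A).card = k + 1 := by
      rw [Finset.card_insert_of_notMem huA, hAk]
    have hvS : v ∉ insert u A := by
      rw [Finset.mem_insert]; push_neg; exact ⟨huv.symm, hvA⟩
    obtain ⟨a, haS, hadj⟩ := key (insert u A) v hcard hvS
    rcases Finset.mem_insert.mp haS with rfl | haA
    · exact hadj
    · exact absurd hadj (hAB a haA v hv)
  refine ⟨hx, hAcomp, hBcomp, ?_⟩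
  intro u v
  constructor
  · intro hadj
    refine ⟨hadj.ne, ?_⟩
    by_cases hu : u = x
    · exact Or.inl hu
    by_cases hv : v = x
    · exact Or.inr (Or.inl hv)
    rcases Finset.mem_union.mp (hmemAB u hu) with huA | huB <;>
      rcases Finset.mem_union.mp (hmemAB v hv) with hvA | hvB
    · exact Or.inr (Or.inr (Or.inl ⟨huA, hvA⟩))
    · exact absurd hadj (hAB u huA v hvB)
    · exact absurd hadj.symm (hAB v hvA u huB)
    · exact Or.inr (Or.inr (Or.inr ⟨huB, hvB⟩))
  · rintro ⟨hne, rfl | rfl | ⟨huA, hvA⟩ | ⟨huB, hvB⟩⟩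
    · exact hx v hne.symm
    · exact (hx u hne).symm
    · exact hAcomp u huA v hvA hne
    · exact hBcomp u huB v hvB hne
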